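/- For every φ ∈ (0, π/2], there exists a unique pair (ξ*, η*) with ξ* > 1 and η* > 0 such that the cubic Bézier curve p₃(t) = Σ_{j=0}^{3} B_j³(t) b_j with control points b₀ = (cos φ, -sin φ), b₁ = (ξ*, -η*), b₂ = (ξ*, η*), b₃ = (cos φ, sin φ) satisfies ‖p₃(2-√3)‖² = 1 and ‖p₃(√3-1)‖² = 1. -/

import Mathlib

open Real

set_option maxHeartbeats 2000000

private lemma norm_sq_eq_comp (x : EuclideanSpace ℝ (Fin 2)) :
    ‖x‖ ^ 2 = x 0 ^ 2 + x 1 ^ 2 := by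
  rw [EuclideanSpace.norm_eq, Real.sq_sqrt (by positivity)]
  simp [Fin.sum_univ_two, Real.norm_eq_abs, sq_abs]

/-- Uniqueness core: two admissible solutions of the algebraic system coincide. -/
private lemma uniq_key (r c s ξ η ξ' η' : ℝ) (hr : r ^ 2 = 3)
    (hrl : (1.7320504 : ℝ) < r) (hru : r < 1.7320509)
    (hc0 : 0 ≤ c) (hs0 : 0 < s)
    (hξ : 1 < ξ) (hη : 0 < η) (hξ' : 1 < ξ') (hη' : 0 < η')
    (e1 : ((11 - 6*r)/2*c + (6*r - 9)/2*ξ)^2 + ((16 - 9*r)/2*s + (21*r - 36)/2*η)^2 = 1)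
    (e2 : ((13 - 6*r)/4*c + (6*r - 9)/4*ξ)^2 + ((9*r - 13)/4*s + (27 - 15*r)/4*η)^2 = 1)
    (e1' : ((11 - 6*r)/2*c + (6*r - 9)/2*ξ')^2 + ((16 - 9*r)/2*s + (21*r - 36)/2*η')^2 = 1)
    (e2' : ((13 - 6*r)/4*c + (6*r - 9)/4*ξ')^2 + ((9*r - 13)/4*s + (27 - 15*r)/4*η')^2 = 1) :
    ξ' = ξ ∧ η' = η := by
  have hσ : 0 < ξ' + ξ := by linarith only [hξ, hξ']
  have hτ : 0 < η' + η := by linarith only [hη, hη']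
  have h1 : (ξ' - ξ) * (((6*r - 9)/2)^2*(ξ' + ξ) + 2*((11 - 6*r)/2)*((6*r - 9)/2)*c)
      + (η' - η) * (((21*r - 36)/2)^2*(η' + η) + 2*((16 - 9*r)/2)*((21*r - 36)/2)*s) = 0 := by
    linear_combination e1' - e1
  have h2 : (ξ' - ξ) * (((6*r - 9)/4)^2*(ξ' + ξ) + 2*((13 - 6*r)/4)*((6*r - 9)/4)*c)
      + (η' - η) * (((27 - 15*r)/4)^2*(η' + η) + 2*((9*r - 13)/4)*((27 - 15*r)/4)*s) = 0 := by
    linear_combination e2' - e2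
  have hΔid : (((6*r - 9)/2)^2*(ξ' + ξ) + 2*((11 - 6*r)/2)*((6*r - 9)/2)*c) *
        (((27 - 15*r)/4)^2*(η' + η) + 2*((9*r - 13)/4)*((27 - 15*r)/4)*s)
      - (((6*r - 9)/4)^2*(ξ' + ξ) + 2*((13 - 6*r)/4)*((6*r - 9)/4)*c) *
        (((21*r - 36)/2)^2*(η' + η) + 2*((16 - 9*r)/2)*((21*r - 36)/2)*s)
      = ((263898*r - 457083)/64)*((ξ' + ξ)*(η' + η))
        + ((290142 - 167508*r)/64)*(s*(ξ' + ξ))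
        + ((1211598 - 699516*r)/64)*(c*(η' + η))
        + ((235980*r - 408726)/32)*(c*s) := by
    linear_combination ((ξ' + ξ)*(η' + η)*(-34263/16 + 6075/8*r - 243/2*r^2)
      + (ξ' + ξ)*s*(21141/16 - 432*r + 243/4*r^2)
      + c*(η' + η)*(87723/16 - 14121/8*r + 243*r^2)
      + c*s*(-7155/2 + 4185/4*r - 243/2*r^2)) * hr
  have hΔ : 0 < (((6*r - 9)/2)^2*(ξ' + ξ) + 2*((11 - 6*r)/2)*((6*r - 9)/2)*c) *
        (((27 - 15*r)/4)^2*(η' + η) + 2*((9*r - 13)/4)*((27 - 15*r)/4)*s)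
      - (((6*r - 9)/4)^2*(ξ' + ξ) + 2*((13 - 6*r)/4)*((6*r - 9)/4)*c) *
        (((21*r - 36)/2)^2*(η' + η) + 2*((16 - 9*r)/2)*((21*r - 36)/2)*s) := by
    rw [hΔid]
    have c1 : 0 < ((263898*r - 457083)/64)*((ξ' + ξ)*(η' + η)) :=
      mul_pos (by linarith only [hrl]) (mul_pos hσ hτ)
    have c2 : 0 < ((290142 - 167508*r)/64)*(s*(ξ' + ξ)) :=
      mul_pos (by linarith only [hru]) (mul_pos hs0 hσ)
    have c3 : 0 ≤ ((1211598 - 699516*r)/64)*(c*(η' + η)) :=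
      mul_nonneg (by linarith only [hru]) (mul_nonneg hc0 hτ.le)
    have c4 : 0 ≤ ((235980*r - 408726)/32)*(c*s) :=
      mul_nonneg (by linarith only [hrl]) (mul_nonneg hc0 hs0.le)
    linarith only [c1, c2, c3, c4]
  have hu : (ξ' - ξ) * ((((6*r - 9)/2)^2*(ξ' + ξ) + 2*((11 - 6*r)/2)*((6*r - 9)/2)*c) *
        (((27 - 15*r)/4)^2*(η' + η) + 2*((9*r - 13)/4)*((27 - 15*r)/4)*s)
      - (((6*r - 9)/4)^2*(ξ' + ξ) + 2*((13 - 6*r)/4)*((6*r - 9)/4)*c) *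
        (((21*r - 36)/2)^2*(η' + η) + 2*((16 - 9*r)/2)*((21*r - 36)/2)*s)) = 0 := by
    linear_combination (((27 - 15*r)/4)^2*(η' + η) + 2*((9*r - 13)/4)*((27 - 15*r)/4)*s) * h1
      - (((21*r - 36)/2)^2*(η' + η) + 2*((16 - 9*r)/2)*((21*r - 36)/2)*s) * h2
  have hxx : ξ' = ξ := by
    rcases mul_eq_zero.mp hu with h | h
    · linarith only [h]
    · exact absurd h (ne_of_gt hΔ)
  have hQ1 : 0 < ((21*r - 36)/2)^2*(η' + η) + 2*((16 - 9*r)/2)*((21*r - 36)/2)*s := by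
    have t1 : 0 < ((21*r - 36)/2)^2*(η' + η) :=
      mul_pos (pow_pos (by linarith only [hrl]) 2) hτ
    have t2 : 0 ≤ 2*((16 - 9*r)/2)*((21*r - 36)/2)*s := by
      apply mul_nonneg _ hs0.le
      nlinarith only [mul_pos (show (0:ℝ) < (16 - 9*r)/2 by linarith only [hru])
        (show (0:ℝ) < (21*r - 36)/2 by linarith only [hrl])]
    linarith only [t1, t2]
  have hyy : η' = η := by
    rw [hxx] at h1
    simp only [sub_self, zero_mul, zero_add] at h1
    rcases mul_eq_zero.mp h1 with h | h
    · linarith only [h]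
    · exact absurd h (ne_of_gt hQ1)
  exact ⟨hxx, hyy⟩

/-- Main algebraic lemma: existence and uniqueness of the admissible solution. -/
private lemma two_var_key (r c s : ℝ) (hr : r ^ 2 = 3) (hr0 : 0 < r)
    (hc0 : 0 ≤ c) (hc1 : c < 1) (hs0 : 0 < s) (hcs : c ^ 2 + s ^ 2 = 1) :
    ∃! z : ℝ × ℝ, 1 < z.1 ∧ 0 < z.2 ∧
      ((11 - 6*r)/2*c + (6*r - 9)/2*z.1)^2 + ((16 - 9*r)/2*s + (21*r - 36)/2*z.2)^2 = 1 ∧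
      ((13 - 6*r)/4*c + (6*r - 9)/4*z.1)^2 + ((9*r - 13)/4*s + (27 - 15*r)/4*z.2)^2 = 1 := by
  have hs2 : s^2 = 1 - c^2 := by linarith only [hcs]
  have hrl : (1.7320504 : ℝ) < r := by nlinarith
  have hru : r < 1.7320509 := by nlinarith
  have hB2 : (0:ℝ) < (6*r - 9)/4 := by linarith only [hrl]
  have hD2 : (0:ℝ) < (27 - 15*r)/4 := by linarith only [hru]
  -- a = value of x-coordinate at second node when ξ = 1
  have ha0 : 0 < (13 - 6*r)/4*c + (6*r - 9)/4 := by
    have h := mul_nonneg (show (0:ℝ) ≤ (13 - 6*r)/4 by linarith only [hru]) hc0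
    linarith only [h, hrl]
  have ha1 : (13 - 6*r)/4*c + (6*r - 9)/4 < 1 := by
    nlinarith only [mul_pos (show (0:ℝ) < (13 - 6*r)/4 by linarith only [hru])
      (show (0:ℝ) < 1 - c by linarith only [hc1])]
  -- a < wc : a² + C₂²s² < 1
  have hG : ((13 - 6*r)/4*c + (6*r - 9)/4)^2 + ((9*r - 13)/4*s)^2 < 1 := by
    have hid : 1 - ((13 - 6*r)/4*c + (6*r - 9)/4)^2 - ((9*r - 13)/4*s)^2
        = (1 - c)*((342*r - 585)/16 + (78*r - 135)/16*c) := by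
      linear_combination ((-169/16) + (117/8)*r + (-81/16)*r^2)*hs2
        + ((-117/16) + (9/2)*c + (45/16)*c^2)*hr
    linarith only [hid, mul_pos (show (0:ℝ) < 1 - c by linarith only [hc1])
      (show (0:ℝ) < (342*r - 585)/16 + (78*r - 135)/16*c by
        nlinarith only [hrl, mul_nonneg (show (0:ℝ) ≤ (78*r - 135)/16 by
          linarith only [hrl]) hc0])]
  set wc := Real.sqrt (1 - ((9*r - 13)/4*s)^2) with hwc
  have hwcarg : 0 ≤ 1 - ((9*r - 13)/4*s)^2 := by
    linarith only [hG, sq_nonneg ((13 - 6*r)/4*c + (6*r - 9)/4)]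
  have hwc2 : wc^2 = 1 - ((9*r - 13)/4*s)^2 := Real.sq_sqrt hwcarg
  have hawc : (13 - 6*r)/4*c + (6*r - 9)/4 < wc :=
    (Real.lt_sqrt ha0.le).mpr (by linarith only [hG])
  have hwc0 : 0 ≤ wc := Real.sqrt_nonneg _
  -- the one-variable function for the intermediate value argument
  set H : ℝ → ℝ := fun w => (2*w - c)^2 + ((r - 1)*Real.sqrt (1 - w^2) + (r - 2)*s)^2 with hH
  -- endpoint a : H a < 1
  set va := Real.sqrt (1 - ((13 - 6*r)/4*c + (6*r - 9)/4)^2) with hva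
  have hvaarg : 0 ≤ 1 - ((13 - 6*r)/4*c + (6*r - 9)/4)^2 := by
    nlinarith only [mul_pos (show (0:ℝ) < 1 - ((13 - 6*r)/4*c + (6*r - 9)/4) by
        linarith only [ha1])
      (show (0:ℝ) < 1 + ((13 - 6*r)/4*c + (6*r - 9)/4) by linarith only [ha0])]
  have hva2 : va^2 = 1 - ((13 - 6*r)/4*c + (6*r - 9)/4)^2 := Real.sq_sqrt hvaarg
  have hva0 : 0 ≤ va := Real.sqrt_nonneg _
  have hAP0 : 0 ≤ ((1 - c)*((141*r - 244) + (620 - 357*r)*c))/8 := by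
    have h1 : 0 ≤ (141*r - 244) + (620 - 357*r)*c := by
      have h := mul_nonneg (show (0:ℝ) ≤ 620 - 357*r by linarith only [hru]) hc0
      linarith only [h, hrl]
    have h2 := mul_nonneg (show (0:ℝ) ≤ 1 - c by linarith only [hc1]) h1
    linarith only [h2]
  have hK2 : (2*(3*r - 5))^2*((1 - c^2)*(1 - ((13 - 6*r)/4*c + (6*r - 9)/4)^2))
      - (((1 - c)*((141*r - 244) + (620 - 357*r)*c))/8)^2
      = (1 - c)^2*((30213/8*r - 418635/64) + (380115/32 - 6858*r)*c
          + (22491/8*r - 311643/64)*c^2) := by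
    linear_combination ((-111033/64) + (90189/16)*c + (-193347/32)*c^2 + (33813/16)*c^3
      + (1719/64)*c^4 + (513)*r + (-1134)*r*c + (108)*r*c^2 + (1134)*r*c^3 + (-621)*r*c^4
      + (-81)*r^2 + (162)*r^2*c + (-162)*r^2*c^3 + (81)*r^2*c^4) * hr
  have hR : 0 < (30213/8*r - 418635/64) + (380115/32 - 6858*r)*c
      + (22491/8*r - 311643/64)*c^2 := by
    have t2 : 0 ≤ (380115/32 - 6858*r)*c :=
      mul_nonneg (by linarith only [hru]) hc0
    have t3 : 0 ≤ (22491/8*r - 311643/64)*c^2 :=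
      mul_nonneg (by linarith only [hrl]) (sq_nonneg c)
    linarith only [t2, t3, hrl]
  have ht2 : (s*va)^2 = (1 - c^2)*(1 - ((13 - 6*r)/4*c + (6*r - 9)/4)^2) := by
    rw [mul_pow, hva2, hs2]
  have hPlt : (((1 - c)*((141*r - 244) + (620 - 357*r)*c))/8)^2
      < (2*(3*r - 5)*(s*va))^2 := by
    rw [mul_pow, ht2]
    have hpos := mul_pos (pow_pos (show (0:ℝ) < 1 - c by linarith only [hc1]) 2) hR
    linarith only [hK2, hpos]
  have hBt0 : 0 ≤ 2*(3*r - 5)*(s*va) :=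
    mul_nonneg (by linarith only [hrl]) (mul_nonneg hs0.le hva0)
  have hlt : ((1 - c)*((141*r - 244) + (620 - 357*r)*c))/8 < 2*(3*r - 5)*(s*va) :=
    lt_of_pow_lt_pow_left₀ 2 hBt0 hPlt
  have hcore : ((1 - c)*((141*r - 244) + (620 - 357*r)*c))/8 + 2*(5 - 3*r)*(s*va) < 0 := by
    linarith only [hlt]
  have hHa : H ((13 - 6*r)/4*c + (6*r - 9)/4) < 1 := by
    rw [hH]
    show (2*((13 - 6*r)/4*c + (6*r - 9)/4) - c)^2
      + ((r - 1)*Real.sqrt (1 - ((13 - 6*r)/4*c + (6*r - 9)/4)^2) + (r - 2)*s)^2 < 1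
    rw [← hva]
    have hident : (2*((13 - 6*r)/4*c + (6*r - 9)/4) - c)^2 + ((r - 1)*va + (r - 2)*s)^2
        = 1 + (((1 - c)*((141*r - 244) + (620 - 357*r)*c))/8 + 2*(5 - 3*r)*(s*va)) := by
      linear_combination ((r - 1)^2)*hva2 + ((r - 2)^2)*hs2
        + ((-265/16) + 2*s*va + (381/8)*c + (-497/16)*c^2 + (45/4)*r + (-51/2)*r*c
          + (57/4)*r*c^2 + (-9/4)*r^2 + (9/2)*r^2*c + (-9/4)*r^2*c^2)*hr
    linarith only [hident, hcore]
  -- endpoint wc : H wc > 1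
  have hsqwc : Real.sqrt (1 - wc^2) = (9*r - 13)/4*s := by
    have h1 : 1 - wc^2 = ((9*r - 13)/4*s)^2 := by rw [hwc2]; ring
    rw [h1, Real.sqrt_sq (mul_nonneg (show (0:ℝ) ≤ (9*r - 13)/4 by linarith only [hrl]) hs0.le)]
  have hHwc : 1 < H wc := by
    rw [hH]
    show 1 < (2*wc - c)^2 + ((r - 1)*Real.sqrt (1 - wc^2) + (r - 2)*s)^2
    rw [hsqwc]
    have hLL0 : 0 < (99 - 54*r)/4 + (54*r - 83)/4*c^2 := by
      have h := mul_nonneg (show (0:ℝ) ≤ (54*r - 83)/4 by linarith only [hrl])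
        (sq_nonneg c)
      linarith only [h, hru]
    have hK3 : ((99 - 54*r)/4 + (54*r - 83)/4*c^2)^2 - 16*c^2*(1 - ((9*r - 13)/4*s)^2)
        = (1 - c)*(1 + c)*(((18549 - 10692*r)/16)*(1 - c^2) + ((9504 - 5472*r)/16)*c^2) := by
      linear_combination ((169)*c^2 + (-234)*r*c^2 + (81)*r^2*c^2)*hs2
        + (729/4 + (-567/2)*c^2 + (405/4)*c^4)*hr
    have hq0 : 0 < ((18549 - 10692*r)/16)*(1 - c^2) + ((9504 - 5472*r)/16)*c^2 := by
      have hc2 : (0:ℝ) < 1 - c^2 := by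
        have h1 : (0:ℝ) < 1 - c := by linarith only [hc1]
        have h2 : (0:ℝ) < 1 + c := by linarith only [hc0]
        nlinarith only [mul_pos h1 h2]
      have t1 : 0 < ((18549 - 10692*r)/16)*(1 - c^2) :=
        mul_pos (by linarith only [hru]) hc2
      have t2 : 0 ≤ ((9504 - 5472*r)/16)*c^2 :=
        mul_nonneg (by linarith only [hru]) (sq_nonneg c)
      linarith only [t1, t2]
    have hprod : 0 < (1 - c)*(1 + c)*(((18549 - 10692*r)/16)*(1 - c^2)
        + ((9504 - 5472*r)/16)*c^2) :=
      mul_pos (mul_pos (show (0:ℝ) < 1 - c by linarith only [hc1])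
        (show (0:ℝ) < 1 + c by linarith only [hc0])) hq0
    have h4cwc : (4*c*wc)^2 = 16*c^2*(1 - ((9*r - 13)/4*s)^2) := by
      rw [← hwc2]; ring
    have hcwc0 : 0 ≤ 4*c*wc := by positivity
    have hsq4 : (4*c*wc)^2 < ((99 - 54*r)/4 + (54*r - 83)/4*c^2)^2 := by
      rw [h4cwc]; linarith only [hK3, hprod]
    have hgt : 4*c*wc < (99 - 54*r)/4 + (54*r - 83)/4*c^2 :=
      lt_of_pow_lt_pow_left₀ 2 hLL0.le hsq4
    have hident2 : (2*wc - c)^2 + ((r - 1)*((9*r - 13)/4*s) + (r - 2)*s)^2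
        = 1 + (((99 - 54*r)/4 + (54*r - 83)/4*c^2) - 4*c*wc) := by
      linear_combination (4 : ℝ)*hwc2
        + ((-651/16) + (189/4)*r + (45/8)*r^2 + (-81/4)*r^3 + (81/16)*r^4)*hs2
        + ((333/16) + (-333/16)*c^2 + (-81/4)*r + (81/4)*r*c^2 + (81/16)*r^2
          + (-81/16)*r^2*c^2)*hr
    linarith only [hident2, hgt]
  -- continuity and the intermediate value theorem
  have hcont : ContinuousOn H (Set.Icc ((13 - 6*r)/4*c + (6*r - 9)/4) wc) := by
    rw [hH]
    apply Continuous.continuousOn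
    fun_prop
  obtain ⟨w₀, hw₀mem, hHw₀⟩ :=
    intermediate_value_Icc hawc.le hcont ⟨hHa.le, hHwc.le⟩
  have hw₀a : (13 - 6*r)/4*c + (6*r - 9)/4 < w₀ := by
    rcases lt_or_eq_of_le hw₀mem.1 with h | h
    · exact h
    · exfalso; rw [← h] at hHw₀; linarith only [hHw₀, hHa]
  have hw₀wc : w₀ < wc := by
    rcases lt_or_eq_of_le hw₀mem.2 with h | h
    · exact h
    · exfalso; rw [h] at hHw₀; linarith only [hHw₀, hHwc]
  have hw₀0 : 0 < w₀ := lt_trans ha0 hw₀a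
  have hw₀sq : w₀^2 < wc^2 := by nlinarith only [hw₀wc, hw₀0, hwc0]
  have harg : ((9*r - 13)/4*s)^2 < 1 - w₀^2 := by linarith only [hwc2, hw₀sq]
  have harg0 : 0 ≤ 1 - w₀^2 := by linarith only [harg, sq_nonneg ((9*r - 13)/4*s)]
  set v₀ := Real.sqrt (1 - w₀^2) with hv₀
  have hv₀2 : v₀^2 = 1 - w₀^2 := Real.sq_sqrt harg0
  have hv₀C : (9*r - 13)/4*s < v₀ :=
    (Real.lt_sqrt (mul_nonneg (show (0:ℝ) ≤ (9*r - 13)/4 by linarith only [hrl]) hs0.le)).mpr harg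
  have hHw₀' : (2*w₀ - c)^2 + ((r - 1)*v₀ + (r - 2)*s)^2 = 1 := by
    rw [hv₀]
    rw [hH] at hHw₀
    exact hHw₀
  -- the admissible solution
  set ξ₀ := (w₀ - (13 - 6*r)/4*c)/((6*r - 9)/4) with hξ₀
  set η₀ := (v₀ - (9*r - 13)/4*s)/((27 - 15*r)/4) with hη₀
  have hB2ne : (6*r - 9)/4 ≠ 0 := ne_of_gt hB2
  have hD2ne : (27 - 15*r)/4 ≠ 0 := ne_of_gt hD2
  have hx2 : (13 - 6*r)/4*c + (6*r - 9)/4*ξ₀ = w₀ := by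
    rw [hξ₀, mul_div_cancel₀ _ hB2ne]; ring
  have hy2v : (9*r - 13)/4*s + (27 - 15*r)/4*η₀ = v₀ := by
    rw [hη₀, mul_div_cancel₀ _ hD2ne]; ring
  have hξ₀1 : 1 < ξ₀ := by
    rw [hξ₀, lt_div_iff₀ hB2]
    linarith only [hw₀a]
  have hη₀0 : 0 < η₀ := by
    rw [hη₀]
    exact div_pos (by linarith only [hv₀C]) hD2
  have hx1 : (11 - 6*r)/2*c + (6*r - 9)/2*ξ₀ = 2*w₀ - c := by
    linear_combination 2*hx2
  have hy1 : (16 - 9*r)/2*s + (21*r - 36)/2*η₀ = (r - 1)*v₀ + (r - 2)*s := by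
    linear_combination (r - 1)*hy2v + (15/4*η₀ - 9/4*s)*hr
  have he1 : ((11 - 6*r)/2*c + (6*r - 9)/2*ξ₀)^2
      + ((16 - 9*r)/2*s + (21*r - 36)/2*η₀)^2 = 1 := by
    rw [hx1, hy1]; exact hHw₀'
  have he2 : ((13 - 6*r)/4*c + (6*r - 9)/4*ξ₀)^2
      + ((9*r - 13)/4*s + (27 - 15*r)/4*η₀)^2 = 1 := by
    rw [hx2, hy2v]
    linear_combination hv₀2
  refine ⟨⟨ξ₀, η₀⟩, ⟨hξ₀1, hη₀0, he1, he2⟩, ?_⟩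
  rintro ⟨ξ', η'⟩ ⟨h1', h2', he1', he2'⟩
  obtain ⟨hA, hB⟩ := uniq_key r c s ξ₀ η₀ ξ' η' hr hrl hru hc0 hs0
    hξ₀1 hη₀0 h1' h2' he1 he2 he1' he2'
  exact Prod.ext_iff.mpr ⟨hA, hB⟩

theorem cubic_G0_unique_admissible_solution (φ : ℝ) (hφ : φ ∈ Set.Ioc 0 (π / 2))
    (p₃ : ℝ × ℝ → ℝ → EuclideanSpace ℝ (Fin 2))
    (hp₃ : ∀ z : ℝ × ℝ, ∀ t : ℝ, p₃ z t =
      ((1 - t) / 2) ^ 3 • (!₂[Real.cos φ, -Real.sin φ] : EuclideanSpace ℝ (Fin 2)) +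
      (3 * ((1 + t) / 2) * ((1 - t) / 2) ^ 2) • (!₂[z.1, -z.2] : EuclideanSpace ℝ (Fin 2)) +
      (3 * ((1 + t) / 2) ^ 2 * ((1 - t) / 2)) • (!₂[z.1, z.2] : EuclideanSpace ℝ (Fin 2)) +
      ((1 + t) / 2) ^ 3 • (!₂[Real.cos φ, Real.sin φ] : EuclideanSpace ℝ (Fin 2))) :
    ∃! z : ℝ × ℝ, 1 < z.1 ∧ 0 < z.2 ∧
      ‖p₃ z (2 - Real.sqrt 3)‖ ^ 2 = 1 ∧ ‖p₃ z (Real.sqrt 3 - 1)‖ ^ 2 = 1 := by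
  obtain ⟨hφ0, hφle⟩ := hφ
  have hπ := Real.pi_pos
  set r := Real.sqrt 3 with hrdef
  have hr : r ^ 2 = 3 := Real.sq_sqrt (by norm_num)
  have hr0 : 0 < r := Real.sqrt_pos.mpr (by norm_num)
  set c := Real.cos φ with hcdef
  set s := Real.sin φ with hsdef
  have hs0 : 0 < s := Real.sin_pos_of_pos_of_lt_pi hφ0 (by linarith)
  have hc0 : 0 ≤ c := Real.cos_nonneg_of_mem_Icc ⟨by linarith, hφle⟩
  have hc1 : c < 1 := by
    have h := Real.cos_lt_cos_of_nonneg_of_le_pi le_rfl (by linarith) hφ0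
    simpa using h
  have hcs : c ^ 2 + s ^ 2 = 1 := by
    rw [hcdef, hsdef]; exact Real.cos_sq_add_sin_sq φ
  have key := two_var_key r c s hr hr0 hc0 hc1 hs0 hcs
  have happ : ∀ (u v w x : EuclideanSpace ℝ (Fin 2)) (i : Fin 2),
      (u + v + w + x) i = u i + v i + w i + x i := fun _ _ _ _ _ => rfl
  have hsm : ∀ (a : ℝ) (v : EuclideanSpace ℝ (Fin 2)) (i : Fin 2),
      (a • v) i = a * v i := fun _ _ _ => rfl
  have comp10 : ∀ z : ℝ × ℝ, (p₃ z (2 - r)) 0 = (11 - 6*r)/2*c + (6*r - 9)/2*z.1 := by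
    intro z
    rw [hp₃]
    simp only [happ, hsm, PiLp.toLp_apply, Matrix.cons_val_zero]
    linear_combination (3/4*c - 3/4*z.1) * hr
  have comp11 : ∀ z : ℝ × ℝ, (p₃ z (2 - r)) 1 = (16 - 9*r)/2*s + (21*r - 36)/2*z.2 := by
    intro z
    rw [hp₃]
    simp only [happ, hsm, PiLp.toLp_apply, Matrix.cons_val_one, Matrix.head_cons, Matrix.cons_val_zero]
    linear_combination ((3/2 - 1/4*r)*s + (-9/2 + 3/4*r)*z.2) * hr
  have comp20 : ∀ z : ℝ × ℝ, (p₃ z (r - 1)) 0 = (13 - 6*r)/4*c + (6*r - 9)/4*z.1 := by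
    intro z
    rw [hp₃]
    simp only [happ, hsm, PiLp.toLp_apply, Matrix.cons_val_zero]
    linear_combination (3/4*c - 3/4*z.1) * hr
  have comp21 : ∀ z : ℝ × ℝ, (p₃ z (r - 1)) 1 = (9*r - 13)/4*s + (27 - 15*r)/4*z.2 := by
    intro z
    rw [hp₃]
    simp only [happ, hsm, PiLp.toLp_apply, Matrix.cons_val_one, Matrix.head_cons, Matrix.cons_val_zero]
    linear_combination ((-3/4 + 1/4*r)*s + (9/4 - 3/4*r)*z.2) * hr
  have hv1 : ∀ z : ℝ × ℝ, ‖p₃ z (2 - r)‖ ^ 2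
      = ((11 - 6*r)/2*c + (6*r - 9)/2*z.1)^2 + ((16 - 9*r)/2*s + (21*r - 36)/2*z.2)^2 := by
    intro z
    rw [norm_sq_eq_comp, comp10 z, comp11 z]
  have hv2 : ∀ z : ℝ × ℝ, ‖p₃ z (r - 1)‖ ^ 2
      = ((13 - 6*r)/4*c + (6*r - 9)/4*z.1)^2 + ((9*r - 13)/4*s + (27 - 15*r)/4*z.2)^2 := by
    intro z
    rw [norm_sq_eq_comp, comp20 z, comp21 z]
  refine (existsUnique_congr fun z => ?_).mpr key
  rw [hv1 z, hv2 z]
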